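/- Let 0 < q < ∞ and K_q > 0. Let σ = (σ_s)_{s∈𝓕} be a family of real numbers with σ_s > 1 for every s ∈ 𝓕, which is increasing with respect to the componentwise order (σ_{s'} ≤ σ_s whenever s'_j ≤ s_j for all j) and satisfies σ_{e^{i'}} ≤ σ_{e^{i}} whenever i' ≤ i, where e^i ∈ 𝓕 denotes the sequence with i-th entry 1 and all other entries 0. Assume Σ_{s∈𝓕} σ_s^{-q} ≤ K_q. Then for every ξ > 1, every s ∈ Λ(ξ) and every index j (counted from 1) with s_j > 0, one has j ≤ K_q ξ. -/

import Mathlib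

/-- Lemma A.1(iii): if `σ` is increasing for the componentwise
order on `𝓕 = ℕ →₀ ℕ`, monotone along the unit vectors `e^i = single i 1`, and
`∑_{s∈𝓕} σ_s^{-q} ≤ K_q`, then for every `ξ > 1`, every `s ∈ Λ(ξ)` and every
index `j` (counted from 1, i.e. the Lean index `j : ℕ` corresponds to the
paper's index `j + 1`) with `s_j > 0`, one has `j + 1 ≤ K_q ξ`. -/
theorem stmt_5 (q Kq : ℝ) (hq : 0 < q) (hK : 0 < Kq)
    (σ : (ℕ →₀ ℕ) → ℝ) (hσ : ∀ s, 1 < σ s)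
    (hmono : ∀ s s' : ℕ →₀ ℕ, s' ≤ s → σ s' ≤ σ s)
    (hsingle : ∀ i' i : ℕ, i' ≤ i →
      σ (Finsupp.single i' 1) ≤ σ (Finsupp.single i 1))
    (hsum : Summable fun s => σ s ^ (-q))
    (hle : ∑' s, σ s ^ (-q) ≤ Kq) :
    ∀ ξ : ℝ, 1 < ξ → ∀ s : ℕ →₀ ℕ, σ s ^ q ≤ ξ → ∀ j : ℕ, 0 < s j →
      ((j : ℝ) + 1) ≤ Kq * ξ := by
  intro ξ hξ s hsξ j hj
  have hξ0 : (0:ℝ) < ξ := lt_trans one_pos hξ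
  have hpos : ∀ t, (0:ℝ) < σ t := fun t => lt_trans one_pos (hσ t)
  -- each σ(single i 1)^(-q) ≥ ξ⁻¹ for i ≤ j
  have key : ∀ i ≤ j, ξ⁻¹ ≤ σ (Finsupp.single i 1) ^ (-q) := by
    intro i hi
    have h1 : Finsupp.single j 1 ≤ s := by
      intro k
      classical
      by_cases hk : k = j
      · subst hk; simpa [Finsupp.single_apply] using Nat.one_le_iff_ne_zero.mpr hj.ne'
      · simp [Finsupp.single_apply, Ne.symm hk]
    have h2 : σ (Finsupp.single i 1) ≤ σ s :=
      le_trans (hsingle i j hi) (hmono s _ h1)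
    have h3 : σ (Finsupp.single i 1) ^ q ≤ ξ :=
      le_trans (Real.rpow_le_rpow (le_of_lt (hpos _)) h2 (le_of_lt hq)) hsξ
    have h4 : (0:ℝ) < σ (Finsupp.single i 1) ^ q :=
      Real.rpow_pos_of_pos (hpos _) q
    rw [Real.rpow_neg (le_of_lt (hpos _))]
    exact inv_anti₀ h4 h3
  -- finite set of singles
  classical
  set T : Finset (ℕ →₀ ℕ) :=
    (Finset.range (j+1)).image (fun i => Finsupp.single i 1) with hT
  have hinj : Set.InjOn (fun i : ℕ => Finsupp.single i 1) (Finset.range (j+1)) := by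
    intro a _ b _ hab
    exact Finsupp.single_left_injective (one_ne_zero) hab
  have hcard : T.card = j + 1 := by
    rw [hT, Finset.card_image_of_injOn hinj, Finset.card_range]
  have hsumT : ((j:ℝ)+1) * ξ⁻¹ ≤ ∑ t ∈ T, σ t ^ (-q) := by
    calc ((j:ℝ)+1) * ξ⁻¹ = ∑ _t ∈ T, ξ⁻¹ := by
          rw [Finset.sum_const, hcard]; push_cast; ring
      _ ≤ ∑ t ∈ T, σ t ^ (-q) := by
          apply Finset.sum_le_sum
          intro t ht
          rw [hT] at ht
          obtain ⟨i, hi, rfl⟩ := Finset.mem_image.mp ht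
          exact key i (Nat.lt_succ_iff.mp (Finset.mem_range.mp hi))
  have hTle : ∑ t ∈ T, σ t ^ (-q) ≤ ∑' t, σ t ^ (-q) := by
    apply Summable.sum_le_tsum T _ hsum
    intro t _
    exact le_of_lt (Real.rpow_pos_of_pos (hpos t) _)
  have : ((j:ℝ)+1) * ξ⁻¹ ≤ Kq := le_trans hsumT (le_trans hTle hle)
  calc ((j:ℝ)+1) = ((j:ℝ)+1) * ξ⁻¹ * ξ := by field_simp
    _ ≤ Kq * ξ := by exact mul_le_mul_of_nonneg_right this (le_of_lt hξ0)
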